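/- For every r ≥ 1, e^{-2r}·sinh(2(r-1)) + e^{-4r}·(r-1) ≤ 1/(2e²) + 1/(4e⁵). -/

import Mathlib

open Real

theorem middle_term_numeric_bound (r : ℝ) (hr : 1 ≤ r) :
    Real.exp (-2 * r) * Real.sinh (2 * (r - 1)) + Real.exp (-4 * r) * (r - 1)
      ≤ 1 / (2 * Real.exp 2) + 1 / (4 * Real.exp 5) := by
  have hpos2 := Real.exp_pos (-2 * r)
  have h1 : Real.exp (-2 * r) * Real.sinh (2 * (r - 1)) ≤ 1 / (2 * Real.exp 2) := by
    rw [Real.sinh_eq]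
    have hineq : Real.exp (-2 * r) * ((Real.exp (2 * (r - 1)) - Real.exp (-(2 * (r - 1)))) / 2)
        ≤ Real.exp (-2 * r) * (Real.exp (2 * (r - 1)) / 2) := by
      have := Real.exp_pos (-(2 * (r - 1)))
      apply mul_le_mul_of_nonneg_left _ hpos2.le
      linarith
    refine hineq.trans (le_of_eq ?_)
    have : Real.exp (-2 * r) * Real.exp (2 * (r - 1)) = Real.exp (-2) := by
      rw [← Real.exp_add]; ring_nf
    rw [show Real.exp (-2 * r) * (Real.exp (2 * (r - 1)) / 2)
        = Real.exp (-2 * r) * Real.exp (2 * (r - 1)) / 2 by ring, this, Real.exp_neg]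
    field_simp
  have h2 : Real.exp (-4 * r) * (r - 1) ≤ 1 / (4 * Real.exp 5) := by
    set t := r - 1 with ht
    have ht0 : 0 ≤ t := by linarith
    have key : 4 * t ≤ Real.exp (4 * t - 1) := by
      have := Real.add_one_le_exp (4 * t - 1)
      linarith
    have hsplit : Real.exp (-4 * r) = Real.exp (-4 * t) * Real.exp (-4) := by
      rw [← Real.exp_add, ht]; ring_nf
    have hkey2 : Real.exp (-4 * t) * t ≤ 1 / (4 * Real.exp 1) := by
      have hE := Real.exp_pos (4 * t)
      have hE1 := Real.exp_pos 1
      have key' : 4 * t * Real.exp 1 ≤ Real.exp (4 * t) := by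
        have := mul_le_mul_of_nonneg_right key hE1.le
        rw [Real.exp_sub] at this
        field_simp at this
        linarith
      rw [show -4 * t = -(4 * t) by ring, Real.exp_neg,
        le_div_iff₀ (by positivity : (0:ℝ) < 4 * Real.exp 1)]
      calc (Real.exp (4 * t))⁻¹ * t * (4 * Real.exp 1)
          = (4 * t * Real.exp 1) * (Real.exp (4 * t))⁻¹ := by ring
        _ ≤ Real.exp (4 * t) * (Real.exp (4 * t))⁻¹ := by
            apply mul_le_mul_of_nonneg_right key' (by positivity)
        _ = 1 := by field_simp
    have h45 : Real.exp (-4) / Real.exp 1 = 1 / Real.exp 5 := by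
      rw [Real.exp_neg, show (5:ℝ) = 1 + 4 by norm_num, Real.exp_add]
      field_simp
    have he4 := Real.exp_pos (-4)
    calc Real.exp (-4 * r) * t = Real.exp (-4) * (Real.exp (-4 * t) * t) := by
          rw [hsplit]; ring
      _ ≤ Real.exp (-4) * (1 / (4 * Real.exp 1)) := by
          apply mul_le_mul_of_nonneg_left hkey2 he4.le
      _ = 1 / (4 * Real.exp 5) := by
          rw [show (5:ℝ) = 4 + 1 by norm_num, Real.exp_add, Real.exp_neg]
          field_simp
  linarith
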